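/- Let B be a unital C*-subalgebra of B(H) and v a unit vector in H. If ABv = BAv for all A, B ∈ B, then ABx = BAx for all A, B ∈ B and all x in the closed subspace [Bv] = closure(span{Bv : B ∈ B}). -/

import Mathlib

/-- The closed linear span of the orbit of a vector under a set of operators. -/
noncomputable def orbitClosure {H : Type*} [NormedAddCommGroup H] [InnerProductSpace ℂ H]
    [CompleteSpace H] (B : StarSubalgebra ℂ (H →L[ℂ] H)) (v : H) : Submodule ℂ H :=
  (Submodule.span ℂ ((fun b : H →L[ℂ] H => b v) '' (B : Set (H →L[ℂ] H)))).topologicalClosure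

/-- If B is a unital C*-subalgebra of B(H), v ∈ H, and ABv = BAv for all A, B ∈ B,
then ABx = BAx for all A, B ∈ B and all x in the closed subspace [Bv]. -/
theorem stmt_8 {H : Type*} [NormedAddCommGroup H] [InnerProductSpace ℂ H] [CompleteSpace H]
    (B : StarSubalgebra ℂ (H →L[ℂ] H)) (v : H)
    (hbeable : ∀ a ∈ B, ∀ b ∈ B, a (b v) = b (a v)) :
    ∀ a ∈ B, ∀ b ∈ B, ∀ x ∈ orbitClosure B v, a (b x) = b (a x) := by
  intro a ha b hb x hx
  set T : H →L[ℂ] H := a.comp b - b.comp a with hT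
  have hker : x ∈ LinearMap.ker (T : H →ₗ[ℂ] H) := by
    have hclosed : IsClosed (LinearMap.ker (T : H →ₗ[ℂ] H) : Set H) := ContinuousLinearMap.isClosed_ker T
    have hsub : orbitClosure B v ≤ LinearMap.ker (T : H →ₗ[ℂ] H) := by
      apply Submodule.topologicalClosure_minimal
      · rw [Submodule.span_le]
        rintro _ ⟨c, hc, rfl⟩
        simp only [SetLike.mem_coe, LinearMap.mem_ker]
        have h1 : (a * b) (c v) = c ((a * b) v) := hbeable _ (mul_mem ha hb) _ hc
        have h2 : (b * a) (c v) = c ((b * a) v) := hbeable _ (mul_mem hb ha) _ hc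
        have h3 : a (b v) = b (a v) := hbeable _ ha _ hb
        simp only [ContinuousLinearMap.mul_apply] at h1 h2 h3
        simp [T, ContinuousLinearMap.sub_apply, ContinuousLinearMap.comp_apply, h1, h2, h3]
      · exact hclosed
    exact hsub hx
  have := LinearMap.mem_ker.mp hker
  simpa [T, sub_eq_zero, ContinuousLinearMap.sub_apply] using this
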